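/- For every integer m ≥ 1, the m-th moment of the Erlang-C diffusion approximation satisfies lim_{ζ → 0⁻} |ζ|^m · ∫_ℝ x^m ν_ζ(x) dx = m!, where ν_ζ is the Erlang-C diffusion density with parameter ζ < 0. -/

import Mathlib

open MeasureTheory Set

namespace ErlangCAux

open Filter

/-- `x ^ m ≤ m! * exp x` for nonnegative `x`. -/
lemma pow_le_factorial_mul_exp (m : ℕ) {x : ℝ} (hx : 0 ≤ x) :
    x ^ m ≤ (m.factorial : ℝ) * Real.exp x := by
  have h : x ^ m / (m.factorial : ℝ) ≤ ∑ i ∈ Finset.range (m + 1), x ^ i / i.factorial := by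
    refine Finset.single_le_sum (f := fun i => x ^ i / (i.factorial : ℝ))
      (fun i _ => by positivity) ?_
    simp
  have h2 := h.trans (Real.sum_le_exp_of_nonneg hx (m + 1))
  have hm : (0 : ℝ) < m.factorial := by positivity
  calc x ^ m = x ^ m / (m.factorial : ℝ) * m.factorial := by field_simp
    _ ≤ Real.exp x * m.factorial := by
        exact mul_le_mul_of_nonneg_right h2 hm.le
    _ = (m.factorial : ℝ) * Real.exp x := mul_comm _ _

/-- `x^m * exp(-(x^2)/2)` is integrable on `ℝ`. -/
lemma integrable_pow_gauss (m : ℕ) :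
    Integrable (fun x : ℝ => x ^ m * Real.exp (-(x ^ 2) / 2)) := by
  have hmaj : Integrable (fun x : ℝ =>
      ((m.factorial : ℝ) * Real.exp 1) * Real.exp (-(1/4 : ℝ) * x ^ 2)) :=
    (integrable_exp_neg_mul_sq (by norm_num : (0:ℝ) < 1/4)).const_mul _
  refine hmaj.mono' (Continuous.aestronglyMeasurable (by continuity)) ?_
  filter_upwards with x
  rw [Real.norm_eq_abs, abs_mul, abs_pow, abs_of_pos (Real.exp_pos _)]
  have h1 : |x| ^ m ≤ (m.factorial : ℝ) * Real.exp |x| :=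
    pow_le_factorial_mul_exp m (abs_nonneg x)
  have h2 : Real.exp |x| * Real.exp (-(x ^ 2) / 2) ≤
      Real.exp 1 * Real.exp (-(1/4 : ℝ) * x ^ 2) := by
    rw [← Real.exp_add, ← Real.exp_add]
    apply Real.exp_le_exp.2
    nlinarith [sq_abs x, sq_nonneg (|x| / 2 - 1)]
  calc |x| ^ m * Real.exp (-(x ^ 2) / 2)
      ≤ ((m.factorial : ℝ) * Real.exp |x|) * Real.exp (-(x ^ 2) / 2) :=
        mul_le_mul_of_nonneg_right h1 (Real.exp_pos _).le
    _ = (m.factorial : ℝ) * (Real.exp |x| * Real.exp (-(x ^ 2) / 2)) := by ring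
    _ ≤ (m.factorial : ℝ) * (Real.exp 1 * Real.exp (-(1/4 : ℝ) * x ^ 2)) := by
        exact mul_le_mul_of_nonneg_left h2 (by positivity)
    _ = ((m.factorial : ℝ) * Real.exp 1) * Real.exp (-(1/4 : ℝ) * x ^ 2) := by ring

lemma integrable_gauss : Integrable (fun x : ℝ => Real.exp (-(x ^ 2) / 2)) := by
  simpa using integrable_pow_gauss 0

/-- `u^n * exp(-u)` is integrable on `(a, ∞)` for `a ≥ 0`. -/
lemma integrableOn_pow_exp (n : ℕ) {a : ℝ} (ha : 0 ≤ a) :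
    IntegrableOn (fun u : ℝ => u ^ n * Real.exp (-u)) (Ioi a) := by
  have h0 : IntegrableOn (fun u : ℝ => u ^ n * Real.exp (-u)) (Ioi 0) := by
    have h := Real.GammaIntegral_convergent (s := (n + 1 : ℝ)) (by positivity)
    refine h.congr_fun (fun x hx => ?_) measurableSet_Ioi
    simp only [add_sub_cancel_right, Real.rpow_natCast]
    ring
  exact h0.mono_set (Ioi_subset_Ioi ha)

/-- `x^n * exp(-(ε x))` is integrable on `(c, ∞)` for `ε > 0`, `c ≥ 0`. -/
lemma integrableOn_pow_exp_mul {ε : ℝ} (hε : 0 < ε) (n : ℕ) {c : ℝ} (hc : 0 ≤ c) :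
    IntegrableOn (fun x : ℝ => x ^ n * Real.exp (-(ε * x))) (Ioi c) := by
  have h := (integrableOn_Ioi_comp_mul_left_iff
      (fun u : ℝ => u ^ n * Real.exp (-u)) c hε).2
    (integrableOn_pow_exp n (mul_nonneg hε.le hc))
  have h2 := h.const_mul ((ε⁻¹) ^ n)
  refine IntegrableOn.congr_fun h2 (fun x hx => ?_) measurableSet_Ioi
  have hεn : (ε : ℝ) ^ n ≠ 0 := pow_ne_zero n hε.ne'
  field_simp [mul_pow]
  rw [← mul_pow, ← mul_assoc, one_div, inv_mul_cancel₀ hε.ne', one_mul]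

/-- The upper incomplete Gamma-type integral. -/
noncomputable def Kf (n : ℕ) (a : ℝ) : ℝ := ∫ u in Ioi a, u ^ n * Real.exp (-u)

lemma Kf_zero (n : ℕ) : Kf n 0 = (n.factorial : ℝ) := by
  rw [Kf, ← Real.Gamma_nat_eq_factorial,
    Real.Gamma_eq_integral (by positivity : (0:ℝ) < (n : ℝ) + 1)]
  refine setIntegral_congr_fun measurableSet_Ioi (fun x hx => ?_)
  rw [add_sub_cancel_right, Real.rpow_natCast]
  ring

lemma Kf_tendsto (n : ℕ) :
    Tendsto (fun a : ℝ => Kf n a) (nhdsWithin 0 (Ioi 0)) (nhds (n.factorial : ℝ)) := by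
  have hb : ∀ a : ℝ, 0 < a → a ≤ 1 → |Kf n a - (n.factorial : ℝ)| ≤ a := by
    intro a ha ha1
    have hI1 : IntegrableOn (fun u : ℝ => u ^ n * Real.exp (-u)) (Ioc 0 a) :=
      (integrableOn_pow_exp n le_rfl).mono_set Ioc_subset_Ioi_self
    have hI2 : IntegrableOn (fun u : ℝ => u ^ n * Real.exp (-u)) (Ioi a) :=
      integrableOn_pow_exp n ha.le
    have hsplit : Kf n 0 = (∫ u in Ioc 0 a, u ^ n * Real.exp (-u)) + Kf n a := by
      rw [Kf, Kf, ← Ioc_union_Ioi_eq_Ioi ha.le,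
        setIntegral_union (Ioc_disjoint_Ioi le_rfl) measurableSet_Ioi hI1 hI2]
    have h0 : 0 ≤ ∫ u in Ioc 0 a, u ^ n * Real.exp (-u) :=
      setIntegral_nonneg measurableSet_Ioc (fun u hu => mul_nonneg (pow_nonneg hu.1.le n) (Real.exp_pos _).le)
    have h1 : (∫ u in Ioc 0 a, u ^ n * Real.exp (-u)) ≤ ∫ _u in Ioc 0 a, (1 : ℝ) := by
      refine setIntegral_mono_on hI1 (integrableOn_const ?_) measurableSet_Ioc ?_
      · rw [Real.volume_Ioc]
        exact ENNReal.ofReal_ne_top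
      · intro u hu
        have hu0 : 0 ≤ u := hu.1.le
        have hun : u ^ n ≤ 1 := pow_le_one₀ hu0 (hu.2.trans ha1)
        have hue : Real.exp (-u) ≤ 1 := Real.exp_le_one_iff.mpr (by linarith)
        calc u ^ n * Real.exp (-u) ≤ 1 * 1 :=
          mul_le_mul hun hue (Real.exp_pos _).le zero_le_one
          _ = 1 := by ring
    have h2 : (∫ _u in Ioc 0 a, (1 : ℝ)) = a := by
      rw [setIntegral_const, Real.volume_real_Ioc_of_le ha.le, smul_eq_mul, mul_one]
      ring
    have hK0 : Kf n 0 = (n.factorial : ℝ) := Kf_zero n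
    rw [abs_le]
    constructor <;> nlinarith [hsplit, h0, h1, h2]
  have h0 : Tendsto (fun a : ℝ => Kf n a - (n.factorial : ℝ))
      (nhdsWithin 0 (Ioi 0)) (nhds 0) := by
    apply squeeze_zero_norm' (a := fun a : ℝ => a)
    · filter_upwards [self_mem_nhdsWithin,
        (eventually_lt_nhds (by norm_num : (0:ℝ) < 1)).filter_mono nhdsWithin_le_nhds]
        with a ha h1
      rw [Real.norm_eq_abs]
      exact hb a ha h1.le
    · exact tendsto_id.mono_left nhdsWithin_le_nhds
  have := h0.add_const (n.factorial : ℝ)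
  simpa using this

/-- Truncated Gaussian moment. -/
noncomputable def F (n : ℕ) (t : ℝ) : ℝ := ∫ x in Iic t, x ^ n * Real.exp (-(x ^ 2) / 2)

noncomputable def Cg (n : ℕ) : ℝ := ∫ x : ℝ, |x ^ n * Real.exp (-(x ^ 2) / 2)|

lemma Cg_nonneg (n : ℕ) : 0 ≤ Cg n := integral_nonneg fun x => abs_nonneg _

lemma F_bound (n : ℕ) (t : ℝ) : |F n t| ≤ Cg n := by
  rw [F, Cg]
  calc |∫ x in Iic t, x ^ n * Real.exp (-(x ^ 2) / 2)|
      ≤ ∫ x in Iic t, |x ^ n * Real.exp (-(x ^ 2) / 2)| :=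
        norm_integral_le_integral_norm (μ := volume.restrict (Iic t))
            (fun x : ℝ => x ^ n * Real.exp (-(x ^ 2) / 2))
    _ ≤ ∫ x : ℝ, |x ^ n * Real.exp (-(x ^ 2) / 2)| :=
        setIntegral_le_integral (integrable_pow_gauss n).abs
          (Eventually.of_forall fun x => abs_nonneg _)

lemma F_nonneg_zero (t : ℝ) : 0 ≤ F 0 t :=
  setIntegral_nonneg measurableSet_Iic (fun x _ => by positivity)

/-- The main analytic limit. -/
lemma aux_tendsto (m : ℕ) :
    Tendsto (fun t : ℝ =>
      (t ^ (m + 1) * Real.exp (-(t ^ 2) / 2) * F m t + Kf m (t * t)) /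
      (t * Real.exp (-(t ^ 2) / 2) * F 0 t + Real.exp (-(t * t))))
      (nhdsWithin 0 (Ioi 0)) (nhds (m.factorial : ℝ)) := by
  have hsm : ∀ (k n : ℕ), 1 ≤ k →
      Tendsto (fun t : ℝ => t ^ k * Real.exp (-(t ^ 2) / 2) * F n t)
        (nhdsWithin 0 (Ioi 0)) (nhds 0) := by
    intro k n hk
    apply squeeze_zero_norm' (a := fun t : ℝ => |t| * Cg n)
    · filter_upwards [(eventually_abs_sub_lt (0:ℝ) (zero_lt_one)).filter_mono
        nhdsWithin_le_nhds] with t ht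
      rw [sub_zero] at ht
      have e1 : |t| ^ k ≤ |t| := by
        simpa using pow_le_pow_of_le_one (abs_nonneg t) ht.le hk
      have e2 : Real.exp (-(t ^ 2) / 2) ≤ 1 :=
        Real.exp_le_one_iff.mpr (by nlinarith [sq_nonneg t])
      have e3 : |F n t| ≤ Cg n := F_bound n t
      rw [Real.norm_eq_abs, abs_mul, abs_mul, abs_pow, abs_of_pos (Real.exp_pos _)]
      calc |t| ^ k * Real.exp (-(t ^ 2) / 2) * |F n t| ≤ |t| * 1 * Cg n := by
            refine mul_le_mul (mul_le_mul e1 e2 (Real.exp_pos _).le (abs_nonneg t)) e3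
              (abs_nonneg _) (by positivity)
        _ = |t| * Cg n := by ring
    · have : Tendsto (fun t : ℝ => |t| * Cg n) (nhds (0:ℝ)) (nhds (|(0:ℝ)| * Cg n)) :=
        (continuous_abs.tendsto (0:ℝ)).mul_const (Cg n)
      simpa using this.mono_left nhdsWithin_le_nhds
  have hsq : Tendsto (fun t : ℝ => t * t) (nhdsWithin 0 (Ioi 0))
      (nhdsWithin 0 (Ioi 0)) := by
    apply tendsto_nhdsWithin_of_tendsto_nhds_of_eventually_within
    · have : Tendsto (fun t : ℝ => t * t) (nhds (0:ℝ)) (nhds ((0:ℝ) * 0)) :=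
        (continuous_id.mul continuous_id).tendsto (0:ℝ)
      simpa using this.mono_left nhdsWithin_le_nhds
    · filter_upwards [self_mem_nhdsWithin] with t ht
      exact mul_pos (mem_Ioi.mp ht) (mem_Ioi.mp ht)
  have hK : Tendsto (fun t : ℝ => Kf m (t * t)) (nhdsWithin 0 (Ioi 0))
      (nhds (m.factorial : ℝ)) := (Kf_tendsto m).comp hsq
  have hnum : Tendsto (fun t : ℝ =>
      t ^ (m + 1) * Real.exp (-(t ^ 2) / 2) * F m t + Kf m (t * t))
      (nhdsWithin 0 (Ioi 0)) (nhds (m.factorial : ℝ)) := by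
    have := (hsm (m + 1) m (by omega)).add hK
    simpa using this
  have hden : Tendsto (fun t : ℝ =>
      t * Real.exp (-(t ^ 2) / 2) * F 0 t + Real.exp (-(t * t)))
      (nhdsWithin 0 (Ioi 0)) (nhds 1) := by
    have h1 := hsm 1 0 le_rfl
    simp only [pow_one] at h1
    have h2 : Tendsto (fun t : ℝ => Real.exp (-(t * t))) (nhdsWithin 0 (Ioi 0))
        (nhds 1) := by
      have : Tendsto (fun t : ℝ => Real.exp (-(t * t))) (nhds (0:ℝ))
          (nhds (Real.exp (-((0:ℝ) * 0)))) :=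
        (Real.continuous_exp.comp ((continuous_id.mul continuous_id).neg)).tendsto (0:ℝ)
      simpa using this.mono_left nhdsWithin_le_nhds
    have := h1.add h2
    simpa using this
  have := hnum.div hden one_ne_zero
  rw [div_one] at this
  exact this

/-- The key pointwise identity for each `ζ < 0`. -/
lemma moment_eq (m : ℕ) (ζ : ℝ) (hζ : ζ < 0) (am ap : ℝ) (f : ℝ → ℝ)
    (ham : 0 < am) (hap : 0 < ap)
    (hneg : ∀ x : ℝ, x ≤ -ζ → f x = am * Real.exp (-(x ^ 2) / 2))
    (hpos : ∀ x : ℝ, -ζ ≤ x → f x = ap * Real.exp (-(|ζ| * x)))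
    (hint : (∫ x : ℝ, f x) = 1) :
    |ζ| ^ m * ∫ x : ℝ, x ^ m * f x =
      ((-ζ) ^ (m + 1) * Real.exp (-((-ζ) ^ 2) / 2) * F m (-ζ) + Kf m ((-ζ) * (-ζ))) /
      ((-ζ) * Real.exp (-((-ζ) ^ 2) / 2) * F 0 (-ζ) + Real.exp (-((-ζ) * (-ζ)))) := by
  set ε : ℝ := -ζ with hεdef
  have hε : 0 < ε := neg_pos.2 hζ
  have habs : |ζ| = ε := abs_of_neg hζ
  rw [habs] at hpos ⊢
  set E : ℝ := Real.exp (-(ε ^ 2) / 2) with hEdef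
  set X : ℝ := Real.exp (-(ε * ε)) with hXdef
  set J : ℝ := ∫ x in Ioi ε, x ^ m * Real.exp (-(ε * x)) with hJdef
  set Jexp : ℝ := ∫ x in Ioi ε, Real.exp (-(ε * x)) with hJexpdef
  -- continuity matching at the junction
  have hma : am = ap * E := by
    have hEE : X = E * E := by
      rw [hXdef, hEdef, ← Real.exp_add]
      congr 1
      ring
    have h1 := hneg ε le_rfl
    have h2 := hpos ε le_rfl
    have heq : am * E = ap * E * E := by
      rw [← hEdef] at h1
      rw [← hXdef] at h2
      rw [← h1, h2, hEE]
      ring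
    exact mul_right_cancel₀ (Real.exp_pos _).ne' heq
  -- integrability of the pieces
  have hint1 : IntegrableOn f (Iic ε) := by
    refine ((integrable_gauss.const_mul am).integrableOn).congr_fun
      (fun x hx => ?_) measurableSet_Iic
    rw [hneg x hx]
  have hint2 : IntegrableOn f (Ioi ε) := by
    refine IntegrableOn.congr_fun ((integrableOn_pow_exp_mul hε 0 hε.le).const_mul ap)
      (fun x hx => ?_) measurableSet_Ioi
    rw [hpos x (le_of_lt hx)]
    simp
  have him1 : IntegrableOn (fun x : ℝ => x ^ m * f x) (Iic ε) := by
    refine (((integrable_pow_gauss m).const_mul am).integrableOn).congr_fun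
      (fun x hx => ?_) measurableSet_Iic
    rw [hneg x hx]
    ring
  have him2 : IntegrableOn (fun x : ℝ => x ^ m * f x) (Ioi ε) := by
    refine IntegrableOn.congr_fun ((integrableOn_pow_exp_mul hε m hε.le).const_mul ap)
      (fun x hx => ?_) measurableSet_Ioi
    rw [hpos x (le_of_lt hx)]
    ring
  -- evaluate the pieces
  have e1 : (∫ x in Iic ε, f x) = am * F 0 ε := by
    rw [F, ← integral_const_mul]
    refine setIntegral_congr_fun measurableSet_Iic (fun x hx => ?_)
    rw [hneg x hx]
    ring
  have e2 : (∫ x in Ioi ε, f x) = ap * Jexp := by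
    rw [hJexpdef, ← integral_const_mul]
    refine setIntegral_congr_fun measurableSet_Ioi (fun x hx => ?_)
    rw [hpos x (le_of_lt hx)]
  have e3 : (∫ x in Iic ε, x ^ m * f x) = am * F m ε := by
    rw [F, ← integral_const_mul]
    refine setIntegral_congr_fun measurableSet_Iic (fun x hx => ?_)
    rw [hneg x hx]
    ring
  have e4 : (∫ x in Ioi ε, x ^ m * f x) = ap * J := by
    rw [hJdef, ← integral_const_mul]
    refine setIntegral_congr_fun measurableSet_Ioi (fun x hx => ?_)
    rw [hpos x (le_of_lt hx)]
    ring
  -- total mass equation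
  have htot : am * F 0 ε + ap * Jexp = 1 := by
    rw [← e1, ← e2, intervalIntegral.integral_Iic_add_Ioi hint1 hint2, hint]
  -- moment equation
  have hmom : (∫ x : ℝ, x ^ m * f x) = am * F m ε + ap * J := by
    rw [← e3, ← e4, intervalIntegral.integral_Iic_add_Ioi him1 him2]
  -- substitution identities
  have h2 : ε * Jexp = X := by
    have hcm := integral_comp_mul_left_Ioi (fun u : ℝ => Real.exp (-u)) ε hε
    simp only [smul_eq_mul, integral_exp_neg_Ioi] at hcm
    rw [hJexpdef, hcm, hXdef, ← mul_assoc, mul_inv_cancel₀ hε.ne', one_mul]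
  have hJ : (∫ x in Ioi ε, (ε * x) ^ m * Real.exp (-(ε * x))) = ε⁻¹ * Kf m (ε * ε) := by
    have hcm := integral_comp_mul_left_Ioi (fun u : ℝ => u ^ m * Real.exp (-u)) ε hε
    simpa [Kf, smul_eq_mul] using hcm
  have hJ2 : ε ^ m * J = ε⁻¹ * Kf m (ε * ε) := by
    rw [← hJ, hJdef, ← integral_const_mul]
    refine setIntegral_congr_fun measurableSet_Ioi (fun x hx => ?_)
    ring
  have hJ' : ε ^ (m + 1) * J = Kf m (ε * ε) := by
    have h := congrArg (fun y => ε * y) hJ2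
    rw [← mul_assoc, ← mul_assoc, mul_inv_cancel₀ hε.ne', one_mul] at h
    calc ε ^ (m + 1) * J = ε * ε ^ m * J := by ring
      _ = Kf m (ε * ε) := h
  -- the denominator
  have hF0 : 0 ≤ F 0 ε := F_nonneg_zero ε
  have hD : 0 < ε * E * F 0 ε + X := by
    have hX : 0 < X := Real.exp_pos _
    have hE : 0 < E := Real.exp_pos _
    have h1 : 0 ≤ ε * E * F 0 ε := mul_nonneg (mul_nonneg hε.le hE.le) hF0
    linarith
  have ha2 : ap * (ε * E * F 0 ε + X) = ε := by
    linear_combination ε * htot - ε * (F 0 ε) * hma - ap * h2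
  rw [hmom, eq_div_iff hD.ne']
  linear_combination ε ^ m * (F m ε) * (ε * E * F 0 ε + X) * hma +
    ε ^ m * E * (F m ε) * ha2 + ε ^ m * J * ha2 + hJ'

end ErlangCAux

/-- As `ζ → 0⁻`, the `m`-th moment of the Erlang-C diffusion density `ν_ζ`
scaled by `|ζ|^m` converges to `m!`. -/
theorem erlangC_density_moment_limit (m : ℕ) (hm : 1 ≤ m)
    (nu : ℝ → ℝ → ℝ) (aminus aplus : ℝ → ℝ)
    (hprop : ∀ ζ : ℝ, ζ < 0 →
      0 < aminus ζ ∧ 0 < aplus ζ ∧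
      Continuous (nu ζ) ∧
      (∀ x : ℝ, x ≤ -ζ → nu ζ x = aminus ζ * Real.exp (-(x ^ 2) / 2)) ∧
      (∀ x : ℝ, -ζ ≤ x → nu ζ x = aplus ζ * Real.exp (-(|ζ| * x))) ∧
      (∫ x : ℝ, nu ζ x) = 1) :
    Filter.Tendsto (fun ζ : ℝ => |ζ| ^ m * ∫ x : ℝ, x ^ m * nu ζ x)
      (nhdsWithin (0 : ℝ) (Set.Iio 0)) (nhds ((Nat.factorial m : ℕ) : ℝ)) := by
  have hneg_tendsto : Filter.Tendsto (fun ζ : ℝ => -ζ)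
      (nhdsWithin 0 (Set.Iio 0)) (nhdsWithin 0 (Set.Ioi 0)) := by
    apply tendsto_nhdsWithin_of_tendsto_nhds_of_eventually_within
    · simpa using (continuous_neg.tendsto (0:ℝ)).mono_left nhdsWithin_le_nhds
    · filter_upwards [self_mem_nhdsWithin] with ζ hζ
      simpa using hζ
  have hmain := (ErlangCAux.aux_tendsto m).comp hneg_tendsto
  refine hmain.congr' ?_
  filter_upwards [self_mem_nhdsWithin] with ζ hζ
  obtain ⟨ham, hap, _, hneg, hpos, hint⟩ := hprop ζ hζ
  simpa [Function.comp] using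
    (ErlangCAux.moment_eq m ζ hζ (aminus ζ) (aplus ζ) (nu ζ) ham hap hneg hpos hint).symm
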